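/- With initial points x̄^{n+1} = (1, 2, ..., n+1) and x̄^n = (1, 2, ..., n), the h-transformed kernel started from (x̄^{n+1}, x̄^n) factorizes: q_t^{n,+}((x̄^{n+1}, x̄^n), (x, y)) = p_t^{n+1,+}(x̄^{n+1}, x) · λ^n(x, y) for all (x, y) ∈ W^{n+1,n} and t ∈ ℕ, where λ^n(x,y) = n! h_n(y)/h_{n+1}(x) and p_t^{n+1,+}(x̄,x) = (h_{n+1}(x)/h_{n+1}(x̄)) det[φ^{(t)}(x_j − x̄_i)]. -/

import Mathlib

open Matrix BigOperators

/-- Kronecker delta `δ_i : ℤ → ℝ`. -/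
noncomputable def deltaK (i : ℤ) : ℤ → ℝ := fun x => if x = i then 1 else 0

/-- Convolution `(f * g)(x) = Σ_{s+t=x} f(s) g(t)`. -/
noncomputable def conv (f g : ℤ → ℝ) : ℤ → ℝ := fun x => ∑' s : ℤ, f s * g (x - s)

/-- The Bernoulli(1/2) step distribution `φ = (δ_0 + δ_1)/2`. -/
noncomputable def phiB : ℤ → ℝ := fun x => (deltaK 0 x + deltaK 1 x) / 2

/-- `t`-fold convolution power of `φ`. -/
noncomputable def phiPow : ℕ → ℤ → ℝ
  | 0 => deltaK 0
  | (n+1) => conv (phiPow n) phiB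

/-- `Δ⁻¹ f (x) = Σ_{z ≤ x} f(z)`. -/
noncomputable def Dinv (f : ℤ → ℝ) (x : ℤ) : ℝ := ∑' z : {z : ℤ // z ≤ x}, f z.1

/-- Backward difference `Δ f (x) = f(x) - f(x-1)`. -/
noncomputable def Dd (f : ℤ → ℝ) (x : ℤ) : ℝ := f x - f (x - 1)

/-- Vandermonde product `h_n(z) = Π_{i<j} (z_j - z_i)` (real valued). -/
noncomputable def vand (n : ℕ) (z : Fin n → ℤ) : ℝ :=
  ∏ i : Fin n, ∏ j ∈ Finset.Ioi i, ((z j - z i : ℤ) : ℝ)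

/-- The interlacing cone `W^{n+1,n}`: `x_1 ≤ y_1 < x_2 ≤ … ≤ y_n < x_{n+1}`. -/
def interlace (n : ℕ) (x : Fin (n+1) → ℤ) (y : Fin n → ℤ) : Prop :=
  ∀ i : Fin n, x i.castSucc ≤ y i ∧ y i < x i.succ

/-- The determinantal kernel `q_t^n((x,y),(x',y'))` (rows indexed by the starting
point `(x,y)`, columns by the end point `(x',y')`). -/
noncomputable def qker (n t : ℕ) (x : Fin (n+1) → ℤ) (y : Fin n → ℤ)
    (x' : Fin (n+1) → ℤ) (y' : Fin n → ℤ) : ℝ :=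
  (Matrix.fromBlocks
    (Matrix.of fun i j : Fin (n+1) => phiPow t (x' j - x i))
    (Matrix.of fun (i : Fin (n+1)) (j : Fin n) =>
      Dinv (phiPow t) (y' j - x i) - if (i : ℕ) ≤ (j : ℕ) then 1 else 0)
    (Matrix.of fun (i : Fin n) (j : Fin (n+1)) => Dd (phiPow t) (x' j - y i))
    (Matrix.of fun i j : Fin n => phiPow t (y' j - y i))).det

/-- `λ^n(x,y) = n! h_n(y)/h_{n+1}(x)`. -/
noncomputable def lam (n : ℕ) (x : Fin (n+1) → ℤ) (y : Fin n → ℤ) : ℝ :=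
  (n.factorial : ℝ) * vand n y / vand (n+1) x

/-- `p_t^{n,+}(y,y') = (h_n(y')/h_n(y)) det[φ^{(t)}(y'_j - y_i)]`. -/
noncomputable def pplus (n t : ℕ) (y y' : Fin n → ℤ) : ℝ :=
  (vand n y' / vand n y) * (Matrix.of fun i j : Fin n => phiPow t (y' j - y i)).det


section Aux

lemma phiPow_succ (n : ℕ) (x : ℤ) :
    phiPow (n+1) x = (phiPow n x + phiPow n (x-1))/2 := by
  show conv (phiPow n) phiB x = _
  unfold conv
  rw [tsum_eq_sum (s := ({x, x-1} : Finset ℤ)) ?_]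
  · rw [Finset.sum_pair (by omega)]
    simp [phiB, deltaK]
    ring
  · intro s hs
    simp only [Finset.mem_insert, Finset.mem_singleton] at hs
    push_neg at hs
    have h1 : x - s ≠ 0 := by omega
    have h2 : x - s ≠ 1 := by omega
    simp [phiB, deltaK, h1, h2]

lemma phiPow_eq_zero {t : ℕ} {z : ℤ} (h : z < 0 ∨ (t:ℤ) < z) : phiPow t z = 0 := by
  induction t generalizing z with
  | zero => simp [phiPow, deltaK]; omega
  | succ n ih =>
    rw [phiPow_succ, ih (by omega), ih (by omega)]
    norm_num

lemma Dinv_phiPow (t : ℕ) (x : ℤ) :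
    Dinv (phiPow t) x = ∑ z ∈ Finset.Icc (0:ℤ) t, if z ≤ x then phiPow t z else 0 := by
  unfold Dinv
  have : ∑' z : {z : ℤ // z ≤ x}, phiPow t z.1
      = ∑' z : ℤ, Set.indicator {z : ℤ | z ≤ x} (phiPow t) z := by
    exact (tsum_subtype {z : ℤ | z ≤ x} (phiPow t))
  rw [this, tsum_eq_sum (s := Finset.Icc (0:ℤ) t)]
  · refine Finset.sum_congr rfl fun z hz => ?_
    rw [Set.indicator_apply]
    rfl
  · intro z hz
    rw [Set.indicator_apply]
    simp only [Finset.mem_Icc] at hz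
    split
    · exact phiPow_eq_zero (by omega)
    · rfl

lemma Dinv_sub (t : ℕ) (x : ℤ) :
    Dinv (phiPow t) x - Dinv (phiPow t) (x-1) = phiPow t x := by
  rw [Dinv_phiPow, Dinv_phiPow, ← Finset.sum_sub_distrib]
  have : ∀ z ∈ Finset.Icc (0:ℤ) t,
      ((if z ≤ x then phiPow t z else 0) - (if z ≤ x-1 then phiPow t z else 0))
        = if z = x then phiPow t z else 0 := by
    intro z _
    by_cases hzx : z = x
    · subst hzx
      simp [show ¬ (z ≤ z - 1) by omega]
    · rw [if_neg hzx]
      by_cases h : z ≤ x - 1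
      · rw [if_pos h, if_pos (by omega : z ≤ x)]; ring
      · rw [if_neg h, if_neg (by omega : ¬ z ≤ x)]; ring
  rw [Finset.sum_congr rfl this, Finset.sum_ite_eq' (Finset.Icc (0:ℤ) t) x (phiPow t)]
  split_ifs with h
  · rfl
  · simp only [Finset.mem_Icc] at h
    exact (phiPow_eq_zero (by omega)).symm

lemma prod_Ioi_eq (n : ℕ) (a : Fin n) (f : Fin n → ℝ) :
    ∏ j ∈ Finset.Ioi a, f j = ∏ j : Fin n, if a < j then f j else 1 := by
  rw [← Finset.prod_filter]
  congr 1
  ext j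
  simp [Finset.mem_Ioi, Finset.mem_filter]

lemma vand_peel (n : ℕ) (z : Fin (n+1) → ℤ) :
    vand (n+1) z = vand n (z ∘ Fin.castSucc) *
      ∏ i : Fin n, ((z (Fin.last n) - z i.castSucc : ℤ) : ℝ) := by
  unfold vand
  rw [Fin.prod_univ_castSucc
    (f := fun i => ∏ j ∈ Finset.Ioi i, ((z j - z i : ℤ) : ℝ))]
  rw [show (Finset.Ioi (Fin.last n)) = ∅ by
    ext j; simp [Finset.mem_Ioi, Fin.lt_iff_val_lt_val, Fin.le_last]
    omega]
  rw [Finset.prod_empty, mul_one]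
  have : ∀ i : Fin n, ∏ j ∈ Finset.Ioi i.castSucc, ((z j - z i.castSucc : ℤ) : ℝ)
      = (∏ j ∈ Finset.Ioi i, ((z j.castSucc - z i.castSucc : ℤ) : ℝ)) *
        ((z (Fin.last n) - z i.castSucc : ℤ) : ℝ) := by
    intro i
    rw [prod_Ioi_eq, prod_Ioi_eq, Fin.prod_univ_castSucc
      (f := fun j => if i.castSucc < j then ((z j - z i.castSucc : ℤ) : ℝ) else 1)]
    rw [if_pos (by simp [Fin.lt_iff_val_lt_val, i.isLt] : i.castSucc < Fin.last n)]
    congr 1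
  rw [Finset.prod_congr rfl fun i _ => this i, Finset.prod_mul_distrib]
  rfl

lemma prod_sub_fin (n : ℕ) : ∏ i : Fin n, ((n : ℤ) - (i : ℤ)) = (n.factorial : ℤ) := by
  induction n with
  | zero => simp
  | succ m ih =>
    rw [Fin.prod_univ_succ]
    have h2 : ∀ i : Fin m, (((m+1 : ℕ):ℤ) - ((i.succ : Fin (m+1)) : ℤ)) = (m:ℤ) - (i:ℤ) := by
      intro i; push_cast; simp
    rw [Finset.prod_congr rfl fun i hi => h2 i, ih]
    simp [Nat.factorial_succ]

lemma vand_packed_succ (n : ℕ) :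
    vand (n+1) (fun i : Fin (n+1) => (i:ℤ)+1)
      = vand n (fun i : Fin n => (i:ℤ)+1) * (n.factorial : ℝ) := by
  rw [vand_peel]
  have h1 : (fun i : Fin (n+1) => (i:ℤ)+1) ∘ Fin.castSucc = fun i : Fin n => (i:ℤ)+1 := by
    funext i; simp
  rw [h1]
  congr 1
  calc ∏ i : Fin n, ((((fun i : Fin (n+1) => (i:ℤ)+1) (Fin.last n)
          - (fun i : Fin (n+1) => (i:ℤ)+1) i.castSucc) : ℤ) : ℝ)
      = ((∏ i : Fin n, ((n:ℤ) - (i:ℤ)) : ℤ) : ℝ) := by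
        rw [Int.cast_prod]
        refine Finset.prod_congr rfl fun i _ => ?_
        simp
    _ = (n.factorial : ℝ) := by rw [prod_sub_fin]; simp

lemma vand_pos {n : ℕ} {z : Fin n → ℤ} (hz : StrictMono z) : 0 < vand n z := by
  apply Finset.prod_pos
  intro i _
  apply Finset.prod_pos
  intro j hj
  rw [Finset.mem_Ioi] at hj
  have := hz hj
  have h2 : (0:ℤ) < z j - z i := by omega
  exact_mod_cast h2

lemma strictMono_packed (n : ℕ) : StrictMono (fun i : Fin n => (i:ℤ)+1) := by
  intro a b h
  have : (a:ℕ) < (b:ℕ) := h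
  simp only []
  omega

lemma qker_packed (n t : ℕ) (x : Fin (n+1) → ℤ) (y : Fin n → ℤ) :
    qker n t (fun i => (i : ℤ) + 1) (fun i => (i : ℤ) + 1) x y
      = (Matrix.of fun i j : Fin (n+1) => phiPow t (x j - ((i:ℤ)+1))).det := by
  classical
  set A : Matrix (Fin (n+1)) (Fin (n+1)) ℝ :=
    Matrix.of fun i j : Fin (n+1) => phiPow t (x j - ((i:ℤ)+1)) with hA
  set B : Matrix (Fin (n+1)) (Fin n) ℝ :=
    Matrix.of fun (i : Fin (n+1)) (j : Fin n) =>
      Dinv (phiPow t) (y j - ((i:ℤ)+1)) - if (i : ℕ) ≤ (j : ℕ) then 1 else 0 with hB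
  set F : Matrix (Fin n) (Fin (n+1)) ℝ :=
    Matrix.of fun (i : Fin n) (j : Fin (n+1)) =>
      (if j = i.castSucc then (1:ℝ) else 0) - (if j = i.succ then 1 else 0) with hF
  have hFA : ∀ (C : Matrix (Fin (n+1)) (Fin n) ℝ) (i : Fin n) (j : Fin n),
      (F * C) i j = C i.castSucc j - C i.succ j := by
    intro C i j
    simp only [Matrix.mul_apply, hF, Matrix.of_apply, sub_mul, ite_mul, one_mul, zero_mul]
    rw [Finset.sum_sub_distrib, Finset.sum_ite_eq' Finset.univ i.castSucc (fun k => C k j),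
      Finset.sum_ite_eq' Finset.univ i.succ (fun k => C k j)]
    simp
  have hFA' : ∀ (C : Matrix (Fin (n+1)) (Fin (n+1)) ℝ) (i : Fin n) (j : Fin (n+1)),
      (F * C) i j = C i.castSucc j - C i.succ j := by
    intro C i j
    simp only [Matrix.mul_apply, hF, Matrix.of_apply, sub_mul, ite_mul, one_mul, zero_mul]
    rw [Finset.sum_sub_distrib, Finset.sum_ite_eq' Finset.univ i.castSucc (fun k => C k j),
      Finset.sum_ite_eq' Finset.univ i.succ (fun k => C k j)]
    simp
  have key : (Matrix.fromBlocks A B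
      (Matrix.of fun (i : Fin n) (j : Fin (n+1)) => Dd (phiPow t) (x j - ((i:ℤ)+1)))
      (Matrix.of fun i j : Fin n => phiPow t (y j - ((i:ℤ)+1))))
      = Matrix.fromBlocks (1 : Matrix (Fin (n+1)) (Fin (n+1)) ℝ) 0 F 1 *
        Matrix.fromBlocks A B 0 1 := by
    rw [Matrix.fromBlocks_multiply]
    simp only [Matrix.one_mul, Matrix.mul_zero, Matrix.mul_one, Matrix.zero_mul,
      add_zero, zero_add]
    ext i j
    rcases i with i | i <;> rcases j with j | j
    · simp [Matrix.fromBlocks_apply₁₁]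
    · simp [Matrix.fromBlocks_apply₁₂]
    · -- bottom-left : Dd block = F * A
      simp only [Matrix.fromBlocks_apply₂₁]
      rw [hFA' A i j]
      simp only [hA, Matrix.of_apply, Dd]
      have e1 : x j - (((i.castSucc : Fin (n+1)) : ℤ) + 1) = x j - ((i:ℤ)+1) := by
        simp
      have e2 : x j - (((i.succ : Fin (n+1)) : ℤ) + 1) = x j - ((i:ℤ)+1) - 1 := by
        simp; ring
      rw [e1, e2]
    · -- bottom-right : phi block = F * B + 1
      simp only [Matrix.fromBlocks_apply₂₂]
      rw [Matrix.add_apply, hFA B i j]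
      simp only [hB, Matrix.of_apply]
      have e1 : y j - (((i.castSucc : Fin (n+1)) : ℤ) + 1) = y j - ((i:ℤ)+1) := by simp
      have e2 : y j - (((i.succ : Fin (n+1)) : ℤ) + 1) = y j - ((i:ℤ)+1) - 1 := by
        simp; ring
      rw [e1, e2]
      have hD := Dinv_sub t (y j - ((i:ℤ)+1))
      have hone : (1 : Matrix (Fin n) (Fin n) ℝ) i j = if i = j then 1 else 0 :=
        Matrix.one_apply
      rw [hone]
      simp only [Fin.coe_castSucc, Fin.val_succ]
      rcases lt_trichotomy (i:ℕ) (j:ℕ) with h | h | h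
      · rw [if_pos (le_of_lt h), if_pos (by omega : (i:ℕ) + 1 ≤ (j:ℕ)),
          if_neg (by omega : ¬ i = j)]
        linarith
      · rw [if_pos (le_of_eq h), if_neg (by omega : ¬ (i:ℕ) + 1 ≤ (j:ℕ)),
          if_pos (Fin.ext h : i = j)]
        linarith
      · rw [if_neg (by omega : ¬ (i:ℕ) ≤ (j:ℕ)),
          if_neg (by omega : ¬ (i:ℕ) + 1 ≤ (j:ℕ)),
          if_neg (by omega : ¬ i = j)]
        linarith
  unfold qker
  rw [key, Matrix.det_mul, Matrix.det_fromBlocks_zero₁₂, Matrix.det_fromBlocks_zero₂₁]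
  simp

end Aux


/-- from the densely packed initial configuration
`x̄^{n+1} = (1,…,n+1)`, `x̄^n = (1,…,n)` the `h`-transformed kernel factorizes as
`q_t^{n,+}((x̄^{n+1},x̄^n),(x,y)) = p_t^{n+1,+}(x̄^{n+1},x) λ^n(x,y)`. -/
theorem qkerPlus_packed_factorizes (n t : ℕ) (x : Fin (n+1) → ℤ) (y : Fin n → ℤ)
    (hxy : interlace n x y) :
    (vand n y / vand n (fun i : Fin n => (i : ℤ) + 1)) *
        qker n t (fun i => (i : ℤ) + 1) (fun i => (i : ℤ) + 1) x y
      = pplus (n+1) t (fun i : Fin (n+1) => (i : ℤ) + 1) x * lam n x y := by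
  have hx : StrictMono x := by
    rw [Fin.strictMono_iff_lt_succ]
    intro i
    exact lt_of_le_of_lt (hxy i).1 (hxy i).2
  have hvx : vand (n+1) x ≠ 0 := ne_of_gt (vand_pos hx)
  have hVy : vand n (fun i : Fin n => (i:ℤ)+1) ≠ 0 :=
    ne_of_gt (vand_pos (strictMono_packed n))
  have hVx : vand (n+1) (fun i : Fin (n+1) => (i:ℤ)+1)
      = vand n (fun i : Fin n => (i:ℤ)+1) * (n.factorial : ℝ) := vand_packed_succ n
  have hfac : (n.factorial : ℝ) ≠ 0 := by
    exact_mod_cast n.factorial_ne_zero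
  rw [qker_packed n t x y]
  unfold pplus lam
  rw [hVx]
  field_simp
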